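/- Let J = (f₁,…,f_t) ⊆ I be ideals in a commutative ring R with J ∩ Iⁿ = J·Iⁿ⁻¹ for all n ≥ 1. Set J_s = (f₁,…,f_s). If (J_{t−s} : f_{t−s+1}) = J_{t−s} for every 1 ≤ s ≤ t−1, then J_i ∩ Iⁿ = J_i·Iⁿ⁻¹ for all n ≥ 1 and all 1 ≤ i ≤ t. -/

import Mathlib

/-- Criterion for strongly Aluffi torsion-free: if `J = (f₁,…,f_t) ⊆ I` is Aluffi
torsion-free and `(J_{t−s} : f_{t−s+1}) = J_{t−s}` for `1 ≤ s ≤ t−1` (equivalently,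
each truncation colon condition holds), then each truncation `J_i` is Aluffi torsion-free. -/
theorem strongly_aluffi_torsion_free {R : Type*} [CommRing R] {t : ℕ} (f : Fin t → R)
    (J I : Ideal R) (hJ : J = Ideal.span (Set.range f)) (hJI : J ≤ I)
    (hatf : ∀ n : ℕ, 1 ≤ n → J ⊓ I ^ n = J * I ^ (n - 1))
    (Js : ℕ → Ideal R) (hJs : ∀ s : ℕ, Js s = Ideal.span (f '' {i : Fin t | (i : ℕ) < s}))
    (hcolon : ∀ k : Fin t, 1 ≤ (k : ℕ) →
      Submodule.colon (Js k) (Ideal.span {f k}) = Js k) :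
    ∀ i : ℕ, 1 ≤ i → i ≤ t → ∀ n : ℕ, 1 ≤ n → Js i ⊓ I ^ n = Js i * I ^ (n - 1) := by
  have hJsJ : ∀ s : ℕ, Js s ≤ J := by
    intro s
    rw [hJs, hJ]
    exact Ideal.span_mono (by rintro _ ⟨j, _, rfl⟩; exact ⟨j, rfl⟩)
  have hJt : Js t = J := by
    refine le_antisymm (hJsJ t) ?_
    rw [hJs, hJ]
    exact Ideal.span_mono (by rintro _ ⟨j, rfl⟩; exact ⟨j, j.is_lt, rfl⟩)
  have hsucc : ∀ (i : ℕ) (h : i < t), Js (i + 1) = Js i ⊔ Ideal.span {f ⟨i, h⟩} := by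
    intro i h
    have hset : {j : Fin t | (j : ℕ) < i + 1} = {j : Fin t | (j : ℕ) < i} ∪ {⟨i, h⟩} := by
      ext j
      rw [Set.mem_union, Set.mem_singleton_iff]
      simp only [Set.mem_setOf_eq, Fin.ext_iff]
      omega
    rw [hJs, hJs, hset, Set.image_union, Set.image_singleton, Ideal.span_union]
  have key : ∀ (i : ℕ) (hit : i < t), 1 ≤ i →
      (∀ n : ℕ, 1 ≤ n → Js (i + 1) ⊓ I ^ n = Js (i + 1) * I ^ (n - 1)) →
      ∀ n : ℕ, 1 ≤ n → Js i ⊓ I ^ n = Js i * I ^ (n - 1) := by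
    intro i hit hi1 IH n hn
    have hJsI : Js i ≤ I := (hJsJ i).trans hJI
    have hfI : f ⟨i, hit⟩ ∈ I := hJI (hJ ▸ Ideal.subset_span ⟨⟨i, hit⟩, rfl⟩)
    induction n, hn using Nat.le_induction with
    | base =>
      rw [pow_one, show (1:ℕ) - 1 = 0 from rfl, pow_zero, mul_one]
      exact inf_eq_left.mpr hJsI
    | succ n hn ihn =>
      simp only [Nat.add_sub_cancel]
      refine le_antisymm ?_ (le_inf Ideal.mul_le_left ?_)
      · intro x hx
        obtain ⟨hx1, hx2⟩ := Submodule.mem_inf.mp hx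
        have hx' : x ∈ Js (i + 1) ⊓ I ^ (n + 1) := by
          refine Submodule.mem_inf.mpr ⟨?_, hx2⟩
          rw [hsucc i hit]
          exact Submodule.mem_sup_left hx1
        rw [IH (n + 1) (by omega)] at hx'
        simp only [Nat.add_sub_cancel] at hx'
        rw [hsucc i hit, Ideal.sup_mul] at hx'
        obtain ⟨y, hy, z, hz, hyz⟩ := Submodule.mem_sup.mp hx'
        obtain ⟨a, ha, hfa⟩ := Ideal.mem_span_singleton_mul.mp hz
        have hyJ : y ∈ Js i := Ideal.mul_le_left hy
        have hfaJ : f ⟨i, hit⟩ * a ∈ Js i := by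
          have hzxy : z = x - y := by rw [← hyz]; ring
          rw [hfa, hzxy]; exact Submodule.sub_mem _ hx1 hyJ
        have haJ : a ∈ Js i := by
          rw [← hcolon ⟨i, hit⟩ hi1]
          exact Submodule.mem_colon.mpr (fun s hs => by
            obtain ⟨c, rfl⟩ := Ideal.mem_span_singleton'.mp hs
            rw [smul_eq_mul, show a * (c * f ⟨i, hit⟩) = c * (f ⟨i, hit⟩ * a) by ring]
            exact Ideal.mul_mem_left _ c hfaJ)
        have ha' : a ∈ Js i * I ^ (n - 1) := by
          rw [← ihn]; exact Submodule.mem_inf.mpr ⟨haJ, ha⟩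
        have hz' : z ∈ Js i * I ^ n := by
          rw [← hfa, mul_comm (f ⟨i, hit⟩) a]
          have : a * f ⟨i, hit⟩ ∈ Js i * I ^ (n - 1) * I := Ideal.mul_mem_mul ha' hfI
          rwa [mul_assoc, ← pow_succ, Nat.sub_add_cancel hn] at this
        rw [← hyz]
        exact Submodule.add_mem _ hy hz'
      · calc Js i * I ^ n ≤ I * I ^ n := Ideal.mul_mono_left hJsI
          _ = I ^ (n + 1) := (pow_succ' I n).symm
  have main : ∀ m i : ℕ, 1 ≤ i → i + m = t →
      ∀ n : ℕ, 1 ≤ n → Js i ⊓ I ^ n = Js i * I ^ (n - 1) := by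
    intro m
    induction m with
    | zero =>
      intro i hi1 hit
      rw [Nat.add_zero] at hit
      subst hit
      rw [hJt]
      exact hatf
    | succ m ih =>
      intro i hi1 hit
      exact key i (by omega) hi1 (ih (i + 1) (by omega) (by omega))
  intro i hi1 hit n hn
  exact main (t - i) i hi1 (by omega) n hn
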